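/- Let k : ℝᵈ × ℝᵈ → ℝ be a symmetric positive-semidefinite kernel that is continuously differentiable with all first-order partial derivatives bounded in absolute value by L_k ≥ 0, and such that k(x,y) ≤ k_max for all x, y ∈ ℝᵈ, where k_max > 0. Fix a test point x_ref ∈ ℝᵈ, a noise level σ > 0, and n ∈ ℕ. For data points X = (x₁,…,xₙ) ∈ (ℝᵈ)ⁿ, let σ²_X(x_ref) := k(x_ref,x_ref) − k_X(x_ref)ᵀ (K_X + σ²·I)⁻¹ k_X(x_ref) denote the GP posterior variance at x_ref, where K_X = [k(x_i,x_j)]_{i,j=1}^{n} and k_X(x_ref) = (k(x₁,x_ref),…,k(xₙ,x_ref))ᵀ. Then for every j ∈ {1,…,n} and every coordinate index i ∈ {1,…,d}, the partial derivative of σ²_X(x_ref) with respect to the i-th coordinate of the j-th data point x_j satisfies |∂σ²_X(x_ref)/∂x_{ij}| ≤ (2·L_k·√k_max)/σ + (2·L_k·√n·k_max)/σ². -/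

import Mathlib

open Matrix

/-- The kernel matrix `[k(p i, p j)]_{i,j}` of a tuple of points. -/
noncomputable def kerMat {α : Type*} {m : ℕ} (k : α → α → ℝ) (p : Fin m → α) :
    Matrix (Fin m) (Fin m) ℝ :=
  Matrix.of fun i j => k (p i) (p j)

/-- The GP posterior variance at a test point `z` given data points `p` and
noise variance `σ²`:
`σ²_p(z) = k(z,z) − k_p(z)ᵀ (K_p + σ² I)⁻¹ k_p(z)`. -/
noncomputable def postVar {α : Type*} {m : ℕ} (k : α → α → ℝ) (σ : ℝ) (p : Fin m → α)
    (z : α) : ℝ :=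
  k z z - (fun i => k (p i) z) ⬝ᵥ
    ((kerMat k p + σ ^ 2 • (1 : Matrix (Fin m) (Fin m) ℝ))⁻¹ *ᵥ fun i => k (p i) z)

theorem aux_detDiff {n : ℕ} {M : ℝ → Matrix (Fin n) (Fin n) ℝ} {t : ℝ}
    (h : ∀ a b, DifferentiableAt ℝ (fun t => M t a b) t) :
    DifferentiableAt ℝ (fun t => (M t).det) t := by
  have key : (fun t => (M t).det)
      = fun t => ∑ σ : Equiv.Perm (Fin n), ((Equiv.Perm.sign σ : ℤ) : ℝ) * ∏ i, M t (σ i) i := by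
    funext t; simp [Matrix.det_apply, Units.smul_def, zsmul_eq_mul]
  rw [key]
  exact DifferentiableAt.fun_sum fun σ _ =>
    (DifferentiableAt.fun_finsetProd fun i _ => h (σ i) i).const_mul _

theorem aux_invDiff {n : ℕ} {M : ℝ → Matrix (Fin n) (Fin n) ℝ} {t : ℝ}
    (h : ∀ a b, DifferentiableAt ℝ (fun t => M t a b) t) (hdet : (M t).det ≠ 0)
    (a b : Fin n) : DifferentiableAt ℝ (fun t => (M t)⁻¹ a b) t := by
  have key : (fun t => (M t)⁻¹ a b)
      = fun t => ((M t).det)⁻¹ * ((M t).updateRow b (Pi.single a 1)).det := by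
    funext t
    rw [Matrix.inv_def, Matrix.smul_apply, Matrix.adjugate_apply, Ring.inverse_eq_inv',
      smul_eq_mul]
  rw [key]
  refine DifferentiableAt.mul ((aux_detDiff h).inv hdet) (aux_detDiff fun c e => ?_)
  rcases eq_or_ne c b with rfl | hne
  · simp only [Matrix.updateRow_self]
    exact differentiableAt_const _
  · simp only [Matrix.updateRow_ne hne]
    exact h c e

theorem aux_dotMulVecDeriv {n : ℕ} {u s : ℝ → Fin n → ℝ} {M : ℝ → Matrix (Fin n) (Fin n) ℝ}
    {u' s' : Fin n → ℝ} {M' : Matrix (Fin n) (Fin n) ℝ} {t : ℝ}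
    (hu : ∀ b, HasDerivAt (fun t => u t b) (u' b) t)
    (hM : ∀ a b, HasDerivAt (fun t => M t a b) (M' a b) t)
    (hs : ∀ b, HasDerivAt (fun t => s t b) (s' b) t) :
    HasDerivAt (fun τ => u τ ⬝ᵥ (M τ *ᵥ s τ))
      (u' ⬝ᵥ (M t *ᵥ s t) + u t ⬝ᵥ (M' *ᵥ s t) + u t ⬝ᵥ (M t *ᵥ s')) t := by
  have key : (fun τ => u τ ⬝ᵥ (M τ *ᵥ s τ))
      = fun τ => ∑ b, u τ b * ∑ a, M τ b a * s τ a := by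
    funext τ; simp [dotProduct, Matrix.mulVec]
  rw [key]
  have h := HasDerivAt.fun_sum (fun b (_ : b ∈ Finset.univ) =>
    (hu b).fun_mul (HasDerivAt.fun_sum fun a (_ : a ∈ Finset.univ) => (hM b a).fun_mul (hs a)))
  convert h using 1
  case e'_4 => rfl
  case e'_5 => rfl
  simp [dotProduct, Matrix.mulVec, Finset.sum_add_distrib, mul_add, Finset.mul_sum]
  ring

theorem aux_quadIneq {d n : ℕ} {k : (Fin d → ℝ) → (Fin d → ℝ) → ℝ}
    (hsymm : ∀ x y, k x y = k y x)
    (hpsd : ∀ (m : ℕ) (p : Fin m → (Fin d → ℝ)), (kerMat k p).PosSemidef)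
    (X : Fin n → (Fin d → ℝ)) (z : Fin d → ℝ) (w : Fin n → ℝ) :
    0 ≤ (∑ a, ∑ b, w a * (k (X a) (X b) * w b)) - 2 * (∑ a, w a * k (X a) z) + k z z := by
  have h := (hpsd (n+1) (Fin.snoc X z)).dotProduct_mulVec_nonneg (Fin.snoc w (-1))
  simp only [star_trivial, dotProduct, Matrix.mulVec, kerMat, Matrix.of_apply,
    Fin.sum_univ_castSucc, Fin.snoc_castSucc, Fin.snoc_last, dotProduct] at h
  have hk : ∀ b, k z (X b) = k (X b) z := fun b => hsymm z (X b)
  simp only [hk] at h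
  convert h using 1
  case e'_2 => rfl
  simp only [Finset.mul_sum, mul_add, Finset.sum_add_distrib, mul_neg, mul_one, neg_mul, one_mul,
    Finset.sum_neg_distrib, mul_comm]
  ring_nf
  rw [← Finset.sum_mul]; ring

/-- For a symmetric PSD kernel `k` that is continuously
differentiable, with all first-order partial derivatives bounded in absolute
value by `L_k` and with `k ≤ k_max`, the partial derivative of the GP posterior
variance `σ²_X(x_ref)` with respect to the `i`-th coordinate of the `j`-th data
point is bounded in absolute value by `2L_k√k_max/σ + 2L_k√n·k_max/σ²`. -/
theorem posterior_variance_partial_derivative_bound (d : ℕ)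
    (k : (Fin d → ℝ) → (Fin d → ℝ) → ℝ)
    (hsymm : ∀ x y, k x y = k y x)
    (hpsd : ∀ (m : ℕ) (p : Fin m → (Fin d → ℝ)), (kerMat k p).PosSemidef)
    (hsmooth : ContDiff ℝ 1 (fun p : (Fin d → ℝ) × (Fin d → ℝ) => k p.1 p.2))
    (Lk : ℝ) (hLk : 0 ≤ Lk)
    (hderiv : ∀ (p : (Fin d → ℝ) × (Fin d → ℝ)) (i : Fin d),
      |fderiv ℝ (fun q : (Fin d → ℝ) × (Fin d → ℝ) => k q.1 q.2) p (Pi.single i 1, 0)| ≤ Lk ∧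
      |fderiv ℝ (fun q : (Fin d → ℝ) × (Fin d → ℝ) => k q.1 q.2) p (0, Pi.single i 1)| ≤ Lk)
    (kmax : ℝ) (hkmax : 0 < kmax) (hkbound : ∀ x y, k x y ≤ kmax)
    (xref : Fin d → ℝ) (σ : ℝ) (hσ : 0 < σ) (n : ℕ)
    (X : Fin n → (Fin d → ℝ)) (j : Fin n) (i : Fin d) :
    |fderiv ℝ (fun Y : Fin n → (Fin d → ℝ) => postVar k σ Y xref) X
        (Pi.single j (Pi.single i 1))| ≤
      2 * Lk * Real.sqrt kmax / σ + 2 * Lk * Real.sqrt n * kmax / σ ^ 2 := by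

  have hrhs : 0 ≤ 2 * Lk * Real.sqrt kmax / σ + 2 * Lk * Real.sqrt n * kmax / σ ^ 2 := by
    have h1 : (0:ℝ) ≤ 2 * Lk * Real.sqrt kmax :=
      mul_nonneg (mul_nonneg (by norm_num) hLk) (Real.sqrt_nonneg _)
    have h2 : (0:ℝ) ≤ 2 * Lk * Real.sqrt n * kmax :=
      mul_nonneg (mul_nonneg (mul_nonneg (by norm_num) hLk) (Real.sqrt_nonneg _)) hkmax.le
    exact add_nonneg (div_nonneg h1 hσ.le) (div_nonneg h2 (by positivity))
  by_cases hdiff : DifferentiableAt ℝ (fun Y : Fin n → (Fin d → ℝ) => postVar k σ Y xref) X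
  swap
  · rw [fderiv_zero_of_not_differentiableAt hdiff]
    simpa using hrhs
  -- notation
  set K : (Fin d → ℝ) × (Fin d → ℝ) → ℝ := fun p => k p.1 p.2 with hKdef
  have hK : Differentiable ℝ K := hsmooth.differentiable one_ne_zero
  set Dk : ((Fin d → ℝ) × (Fin d → ℝ)) → ((Fin d → ℝ) × (Fin d → ℝ)) →L[ℝ] ℝ :=
    fun p => fderiv ℝ K p with hDkdef
  set e : Fin n → Fin d → ℝ := Pi.single j (Pi.single i 1) with hedef
  set c : ℝ → (Fin n → Fin d → ℝ) := fun t => X + t • e with hcdef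
  have hc0 : c 0 = X := by simp [hcdef]
  -- positive definiteness of regularized kernel matrices
  have hPD : ∀ Y : Fin n → Fin d → ℝ,
      (kerMat k Y + σ ^ 2 • (1 : Matrix (Fin n) (Fin n) ℝ)).PosDef := by
    intro Y
    rw [Matrix.posDef_iff_dotProduct_mulVec]
    constructor
    · have h2 : ((σ:ℝ) ^ 2 • (1 : Matrix (Fin n) (Fin n) ℝ)).IsHermitian := by
        simp [Matrix.IsHermitian, Matrix.conjTranspose_smul]
      exact (hpsd n Y).1.add h2
    · intro x hx
      have h1 := (hpsd n Y).dotProduct_mulVec_nonneg x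
      have h2 : star x ⬝ᵥ ((σ ^ 2 • (1 : Matrix (Fin n) (Fin n) ℝ)) *ᵥ x)
          = σ ^ 2 * (star x ⬝ᵥ x) := by
        simp [Matrix.smul_mulVec, dotProduct_smul]
      have h3 : (0:ℝ) < star x ⬝ᵥ x := Matrix.dotProduct_star_self_pos_iff.mpr hx
      rw [Matrix.add_mulVec, dotProduct_add, h2]
      have h4 : 0 < σ ^ 2 * (star x ⬝ᵥ x) := by positivity
      linarith
  have hunit : ∀ Y : Fin n → Fin d → ℝ,
      IsUnit (kerMat k Y + σ ^ 2 • (1 : Matrix (Fin n) (Fin n) ℝ)).det :=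
    fun Y => isUnit_iff_ne_zero.mpr (hPD Y).det_pos.ne'
  set A₀ : Matrix (Fin n) (Fin n) ℝ := kerMat k X + σ ^ 2 • 1 with hA0def
  set B₀ : Matrix (Fin n) (Fin n) ℝ := A₀⁻¹ with hB0def
  set v₀ : Fin n → ℝ := fun b => k (X b) xref with hv0def
  set w : Fin n → ℝ := B₀ *ᵥ v₀ with hwdef
  set v' : Fin n → ℝ := fun b => Dk (X b, xref) (e b, 0) with hv'def
  set A' : Matrix (Fin n) (Fin n) ℝ := Matrix.of fun a b => Dk (X a, X b) (e a, e b) with hA'def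
  set B : ℝ → Matrix (Fin n) (Fin n) ℝ :=
    fun t => (kerMat k (c t) + σ ^ 2 • (1 : Matrix (Fin n) (Fin n) ℝ))⁻¹ with hBdef
  -- coordinate curves
  have hcb : ∀ (b : Fin n) (t : ℝ), HasDerivAt (fun t => c t b) (e b) t := by
    intro b t
    have h1 : HasDerivAt (fun t : ℝ => t • e b) ((1:ℝ) • e b) t := (hasDerivAt_id t).smul_const _
    have h2 := h1.const_add (X b)
    simpa [hcdef] using h2
  -- entry derivatives
  have hAent : ∀ (a b : Fin n) (t : ℝ),
      HasDerivAt (fun t => (kerMat k (c t) + σ ^ 2 • (1 : Matrix (Fin n) (Fin n) ℝ)) a b)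
        (Dk (c t a, c t b) (e a, e b)) t := by
    intro a b t
    have h1 : HasDerivAt (fun t => K (c t a, c t b)) (Dk (c t a, c t b) (e a, e b)) t :=
      (hK _).hasFDerivAt.comp_hasDerivAt t ((hcb a t).prodMk (hcb b t))
    exact h1.add_const ((σ ^ 2 • (1 : Matrix (Fin n) (Fin n) ℝ)) a b)
  have hvent : ∀ (b : Fin n) (t : ℝ),
      HasDerivAt (fun t => k (c t b) xref) (Dk (c t b, xref) (e b, 0)) t := by
    intro b t
    exact (hK _).hasFDerivAt.comp_hasDerivAt t ((hcb b t).prodMk (hasDerivAt_const t xref))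
  -- B entries differentiable at 0
  have hBent : ∀ a b : Fin n, HasDerivAt (fun t => B t a b)
      (Matrix.of (fun a b => deriv (fun t => B t a b) 0) a b) 0 := by
    intro a b
    refine (aux_invDiff (fun a b => (hAent a b 0).differentiableAt) ?_ a b).hasDerivAt
    rw [hc0]
    exact isUnit_iff_ne_zero.mp (hunit X)
  set B' : Matrix (Fin n) (Fin n) ℝ := Matrix.of (fun a b => deriv (fun t => B t a b) 0) with hB'def
  -- derivative of A*B = 1
  have hA0ent : ∀ a b : Fin n,
      HasDerivAt (fun t => (kerMat k (c t) + σ ^ 2 • (1 : Matrix (Fin n) (Fin n) ℝ)) a b)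
        (A' a b) 0 := by
    intro a b
    have h := hAent a b 0
    rw [hc0] at h
    exact h
  have hmatzero : A' * B 0 + (kerMat k (c 0) + σ ^ 2 • (1 : Matrix (Fin n) (Fin n) ℝ)) * B' = 0 := by
    have hmulid : ∀ t : ℝ, (kerMat k (c t) + σ ^ 2 • (1 : Matrix (Fin n) (Fin n) ℝ)) * B t = 1 :=
      fun t => Matrix.mul_nonsing_inv _ (hunit (c t))
    ext a b
    have h1 : HasDerivAt
        (fun t => ∑ c', (kerMat k (c t) + σ ^ 2 • (1 : Matrix (Fin n) (Fin n) ℝ)) a c' * B t c' b)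
        (∑ c', (A' a c' * B 0 c' b
          + (kerMat k (c 0) + σ ^ 2 • (1 : Matrix (Fin n) (Fin n) ℝ)) a c' * B' c' b)) 0 :=
      HasDerivAt.fun_sum fun c' _ => (hA0ent a c').mul (hBent c' b)
    have h2 : (fun t => ∑ c',
        (kerMat k (c t) + σ ^ 2 • (1 : Matrix (Fin n) (Fin n) ℝ)) a c' * B t c' b)
        = fun _ : ℝ => (1 : Matrix (Fin n) (Fin n) ℝ) a b := by
      funext t; rw [← Matrix.mul_apply, hmulid t]
    have h3 : HasDerivAt (fun t => ∑ c',
        (kerMat k (c t) + σ ^ 2 • (1 : Matrix (Fin n) (Fin n) ℝ)) a c' * B t c' b) 0 0 := by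
      rw [h2]; exact hasDerivAt_const 0 _
    have h4 := h1.unique h3
    simp only [Matrix.add_apply, Matrix.mul_apply, Matrix.zero_apply]
    rw [← Finset.sum_add_distrib]
    exact h4
  have hB0eq : B 0 = B₀ := by simp only [hBdef, hc0, hB0def, hA0def]
  have hBsymm : B₀ᵀ = B₀ := by
    have hA : A₀ᵀ = A₀ := by
      rw [← Matrix.conjTranspose_eq_transpose_of_trivial]; exact (hPD X).1
    rw [hB0def, Matrix.transpose_nonsing_inv, hA]
  have hB'eq : B' = -(B₀ * A' * B₀) := by
    rw [hc0, hB0eq] at hmatzero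
    have h1 : A₀ * B' = -(A' * B₀) := eq_neg_of_add_eq_zero_right hmatzero
    calc B' = (B₀ * A₀) * B' := by rw [Matrix.nonsing_inv_mul _ (hunit X), one_mul]
      _ = B₀ * (A₀ * B') := by rw [Matrix.mul_assoc]
      _ = B₀ * -(A' * B₀) := by rw [h1]
      _ = -(B₀ * A' * B₀) := by rw [Matrix.mul_neg, Matrix.mul_assoc]
  -- derivative of the posterior variance along the curve
  have hu : ∀ b, HasDerivAt (fun t => k (c t b) xref) (v' b) 0 := by
    intro b
    have h := hvent b 0
    rw [hc0] at h
    exact h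
  have hq := aux_dotMulVecDeriv (u := fun t b => k (c t b) xref) (M := B)
    (s := fun t b => k (c t b) xref) (u' := v') (s' := v') (M' := B') hu hBent hu
  have hu0 : (fun b => k (c 0 b) xref) = v₀ := by rw [hc0]
  beta_reduce at hq
  rw [hu0, hB0eq] at hq
  rw [show B₀ *ᵥ v₀ = w from hwdef.symm] at hq
  have hterm3 : v₀ ⬝ᵥ (B₀ *ᵥ v') = w ⬝ᵥ v' := by
    rw [Matrix.dotProduct_mulVec, ← Matrix.mulVec_transpose, hBsymm, hwdef]
  have hterm2 : v₀ ⬝ᵥ (B' *ᵥ v₀) = -(w ⬝ᵥ (A' *ᵥ w)) := by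
    rw [hB'eq, Matrix.neg_mulVec, dotProduct_neg]
    congr 1
    rw [Matrix.mul_assoc, ← Matrix.mulVec_mulVec, ← Matrix.mulVec_mulVec,
      show B₀ *ᵥ v₀ = w from hwdef.symm, Matrix.dotProduct_mulVec, ← Matrix.mulVec_transpose,
      hBsymm, hwdef]
  have hcfull : HasDerivAt c e 0 := by
    have h1 : HasDerivAt (fun t : ℝ => t • e) ((1:ℝ) • e) 0 := (hasDerivAt_id 0).smul_const _
    have h2 := h1.const_add X
    simpa [hcdef] using h2
  have hgA : HasDerivAt (fun t => postVar k σ (c t) xref)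
      (fderiv ℝ (fun Y : Fin n → (Fin d → ℝ) => postVar k σ Y xref) X e) 0 := by
    have hf' : HasFDerivAt (fun Y : Fin n → (Fin d → ℝ) => postVar k σ Y xref)
        (fderiv ℝ (fun Y : Fin n → (Fin d → ℝ) => postVar k σ Y xref) X) (c 0) :=
      hc0.symm ▸ hdiff.hasFDerivAt
    exact hf'.comp_hasDerivAt 0 hcfull
  have hcomp : HasDerivAt (fun t => postVar k σ (c t) xref)
      (-(v' ⬝ᵥ w + v₀ ⬝ᵥ (B' *ᵥ v₀) + v₀ ⬝ᵥ (B₀ *ᵥ v'))) 0 := by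
    have h1 := hq.const_sub (k xref xref)
    exact h1
  have hval : fderiv ℝ (fun Y : Fin n → (Fin d → ℝ) => postVar k σ Y xref) X e
      = -(v' ⬝ᵥ w - w ⬝ᵥ (A' *ᵥ w) + w ⬝ᵥ v') := by
    have h := hgA.unique hcomp
    rw [h, hterm2, hterm3]
    ring
  -- the PSD bound
  have hquad : σ ^ 2 * (∑ b, w b ^ 2) ≤ kmax := by
    have hAw : A₀ *ᵥ w = v₀ := by
      rw [hwdef, hB0def, Matrix.mulVec_mulVec, Matrix.mul_nonsing_inv _ (hunit X),
        Matrix.one_mulVec]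
    have hwv0 : 0 ≤ v₀ ⬝ᵥ w := by
      have h := ((hPD X).inv.posSemidef).dotProduct_mulVec_nonneg v₀
      simpa [hwdef, hB0def] using h
    have hKw : w ⬝ᵥ (A₀ *ᵥ w) = w ⬝ᵥ (kerMat k X *ᵥ w) + σ ^ 2 * (w ⬝ᵥ w) := by
      rw [hA0def, Matrix.add_mulVec, dotProduct_add, Matrix.smul_mulVec,
        Matrix.one_mulVec, dotProduct_smul, smul_eq_mul]
    rw [hAw] at hKw
    have hqi := aux_quadIneq hsymm hpsd X xref w
    have hs1 : (∑ a, ∑ b, w a * (k (X a) (X b) * w b)) = w ⬝ᵥ (kerMat k X *ᵥ w) := by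
      simp [dotProduct, Matrix.mulVec, kerMat, Finset.mul_sum]
    have hs2 : (∑ a, w a * k (X a) xref) = w ⬝ᵥ v₀ := rfl
    rw [hs1, hs2] at hqi
    have hww : w ⬝ᵥ w = ∑ b, w b ^ 2 := by simp [dotProduct, sq]
    rw [hww] at hKw
    have hkzz : k xref xref ≤ kmax := hkbound _ _
    have hcomm : w ⬝ᵥ v₀ = v₀ ⬝ᵥ w := dotProduct_comm _ _
    linarith
  -- componentwise bounds
  have hejb : ∀ b : Fin n, b ≠ j → e b = 0 := fun b hb => Pi.single_eq_of_ne hb _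
  have hej : e j = Pi.single i 1 := Pi.single_eq_same j _
  have hv'0 : ∀ b, b ≠ j → v' b = 0 := by
    intro b hb
    simp [hv'def, hejb b hb, Prod.mk_zero_zero]
  have hv'j : |v' j| ≤ Lk := by
    have h : v' j = Dk (X j, xref) (Pi.single i 1, 0) := by
      show Dk (X j, xref) (e j, 0) = _
      rw [hej]
    rw [h]
    exact (hderiv (X j, xref) i).1
  have habs1 : |v' ⬝ᵥ w| ≤ Lk * |w j| := by
    have h : v' ⬝ᵥ w = v' j * w j :=
      Finset.sum_eq_single j (fun b _ hb => by rw [hv'0 b hb, zero_mul])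
        (fun h => absurd (Finset.mem_univ j) h)
    rw [h, abs_mul]
    exact mul_le_mul_of_nonneg_right hv'j (abs_nonneg _)
  have habs3 : |w ⬝ᵥ v'| ≤ Lk * |w j| := by
    have h : w ⬝ᵥ v' = w j * v' j :=
      Finset.sum_eq_single j (fun b _ hb => by rw [hv'0 b hb, mul_zero])
        (fun h => absurd (Finset.mem_univ j) h)
    rw [h, abs_mul, mul_comm]
    exact mul_le_mul_of_nonneg_right hv'j (abs_nonneg _)
  have hA'split : ∀ b a, A' b a = (if b = j then Dk (X b, X a) (Pi.single i 1, 0) else 0)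
      + (if a = j then Dk (X b, X a) (0, Pi.single i 1) else 0) := by
    intro b a
    have h0 : A' b a = Dk (X b, X a) (e b, e a) := rfl
    have hsplit : ((e b, e a) : (Fin d → ℝ) × (Fin d → ℝ))
        = ((e b, 0) : (Fin d → ℝ) × (Fin d → ℝ)) + ((0, e a) : (Fin d → ℝ) × (Fin d → ℝ)) := by
      simp
    rw [h0, hsplit, map_add]
    congr 1
    · rcases eq_or_ne b j with rfl | hb
      · rw [if_pos rfl, hej]
      · rw [if_neg hb, hejb b hb]
        simp [Prod.mk_zero_zero]
    · rcases eq_or_ne a j with rfl | ha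
      · rw [if_pos rfl, hej]
      · rw [if_neg ha, hejb a ha]
        simp [Prod.mk_zero_zero]
  set S : ℝ := ∑ b, |w b| with hSdef
  have hSnn : 0 ≤ S := Finset.sum_nonneg fun b _ => abs_nonneg _
  have hwAw : |w ⬝ᵥ (A' *ᵥ w)| ≤ 2 * Lk * |w j| * S := by
    have hexp : w ⬝ᵥ (A' *ᵥ w) = ∑ b, ∑ a, w b * (A' b a * w a) := by
      simp [dotProduct, Matrix.mulVec, Finset.mul_sum]
    calc |w ⬝ᵥ (A' *ᵥ w)| ≤ ∑ b, |∑ a, w b * (A' b a * w a)| := by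
          rw [hexp]; exact Finset.abs_sum_le_sum_abs _ _
      _ ≤ ∑ b, ∑ a, |w b * (A' b a * w a)| :=
          Finset.sum_le_sum fun b _ => Finset.abs_sum_le_sum_abs _ _
      _ ≤ ∑ b, ∑ a, |w b| * (((if b = j then Lk else 0) + (if a = j then Lk else 0)) * |w a|) := by
          refine Finset.sum_le_sum fun b _ => Finset.sum_le_sum fun a _ => ?_
          rw [abs_mul, abs_mul]
          have hAba : |A' b a| ≤ (if b = j then Lk else 0) + (if a = j then Lk else 0) := by
            rw [hA'split b a]
            refine (abs_add_le _ _).trans (add_le_add ?_ ?_)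
            · split_ifs with h
              · exact (hderiv (X b, X a) i).1
              · simp
            · split_ifs with h
              · exact (hderiv (X b, X a) i).2
              · simp
          exact mul_le_mul_of_nonneg_left
            (mul_le_mul_of_nonneg_right hAba (abs_nonneg _)) (abs_nonneg _)
      _ = 2 * Lk * |w j| * S := by
          have h1 : ∀ b : Fin n,
              ∑ a, |w b| * (((if b = j then Lk else 0) + (if a = j then Lk else 0)) * |w a|)
              = (if b = j then Lk else 0) * |w b| * (∑ a, |w a|) + Lk * |w j| * |w b| := by
            intro b
            have h0 : ∀ a : Fin n,
                |w b| * (((if b = j then Lk else 0) + (if a = j then Lk else 0)) * |w a|)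
                = (if b = j then Lk else 0) * |w b| * |w a|
                  + (if a = j then Lk * |w a| * |w b| else 0) := by
              intro a; split_ifs with ha hb <;> ring
            simp only [h0, Finset.sum_add_distrib, Finset.sum_ite_eq', Finset.mem_univ, if_true,
              ← Finset.mul_sum]
          simp only [h1, Finset.sum_add_distrib, ite_mul, zero_mul, Finset.sum_ite_eq',
            Finset.mem_univ, if_true, ← Finset.sum_mul, ← Finset.mul_sum]
          rw [hSdef]
          ring
  -- bounds on w
  have hwj2 : σ ^ 2 * (w j) ^ 2 ≤ kmax := by
    have h1 : (w j) ^ 2 ≤ ∑ b, w b ^ 2 :=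
      Finset.single_le_sum (f := fun b => w b ^ 2) (fun b _ => sq_nonneg _) (Finset.mem_univ j)
    exact (mul_le_mul_of_nonneg_left h1 (sq_nonneg σ)).trans hquad
  have hwjb : |w j| ≤ Real.sqrt kmax / σ := by
    have h1 : (w j) ^ 2 ≤ kmax / σ ^ 2 := by
      rw [le_div_iff₀ (by positivity)]
      linarith
    have h2 := Real.sqrt_le_sqrt h1
    rw [Real.sqrt_sq_eq_abs] at h2
    calc |w j| ≤ Real.sqrt (kmax / σ ^ 2) := h2
      _ = Real.sqrt kmax / σ := by
          rw [Real.sqrt_div hkmax.le, Real.sqrt_sq hσ.le]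
  have hSb : S ≤ Real.sqrt n * (Real.sqrt kmax / σ) := by
    have h1 : S ^ 2 ≤ n * ∑ b, w b ^ 2 := by
      have h := sq_sum_le_card_mul_sum_sq (s := (Finset.univ : Finset (Fin n)))
        (f := fun b => |w b|)
      simpa [sq_abs, Finset.card_univ, hSdef] using h
    have h2 : S ^ 2 ≤ (n : ℝ) * (kmax / σ ^ 2) := by
      have h3 : (∑ b, w b ^ 2) ≤ kmax / σ ^ 2 := by
        rw [le_div_iff₀ (by positivity)]
        linarith
      calc S ^ 2 ≤ (n : ℝ) * ∑ b, w b ^ 2 := h1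
        _ ≤ (n : ℝ) * (kmax / σ ^ 2) := by
            exact mul_le_mul_of_nonneg_left h3 (Nat.cast_nonneg n)
    have h4 := Real.sqrt_le_sqrt h2
    rw [Real.sqrt_sq hSnn] at h4
    calc S ≤ Real.sqrt ((n : ℝ) * (kmax / σ ^ 2)) := h4
      _ = Real.sqrt n * (Real.sqrt kmax / σ) := by
          rw [Real.sqrt_mul (Nat.cast_nonneg n), Real.sqrt_div hkmax.le, Real.sqrt_sq hσ.le]
  -- final estimate
  rw [hval]
  have htri : |(-(v' ⬝ᵥ w - w ⬝ᵥ (A' *ᵥ w) + w ⬝ᵥ v'))|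
      ≤ |v' ⬝ᵥ w| + |w ⬝ᵥ (A' *ᵥ w)| + |w ⬝ᵥ v'| := by
    rw [abs_neg]
    calc |v' ⬝ᵥ w - w ⬝ᵥ (A' *ᵥ w) + w ⬝ᵥ v'|
        ≤ |v' ⬝ᵥ w - w ⬝ᵥ (A' *ᵥ w)| + |w ⬝ᵥ v'| := abs_add_le _ _
      _ ≤ |v' ⬝ᵥ w| + |w ⬝ᵥ (A' *ᵥ w)| + |w ⬝ᵥ v'| := by
          have := abs_sub (v' ⬝ᵥ w) (w ⬝ᵥ (A' *ᵥ w))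
          linarith [abs_sub_abs_le_abs_sub (v' ⬝ᵥ w) (w ⬝ᵥ (A' *ᵥ w))]
  have hfin1 : 2 * (Lk * |w j|) ≤ 2 * Lk * Real.sqrt kmax / σ := by
    rw [mul_div_assoc, ← mul_assoc]
    exact mul_le_mul_of_nonneg_left hwjb (by linarith)
  have hfin2 : 2 * Lk * |w j| * S ≤ 2 * Lk * Real.sqrt n * kmax / σ ^ 2 := by
    have h4 : |w j| * S ≤ (Real.sqrt kmax / σ) * (Real.sqrt n * (Real.sqrt kmax / σ)) :=
      mul_le_mul hwjb hSb hSnn (by positivity)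
    have h5 : (Real.sqrt kmax / σ) * (Real.sqrt n * (Real.sqrt kmax / σ))
        = Real.sqrt n * kmax / σ ^ 2 := by
      have hss : Real.sqrt kmax * Real.sqrt kmax = kmax := Real.mul_self_sqrt hkmax.le
      calc (Real.sqrt kmax / σ) * (Real.sqrt n * (Real.sqrt kmax / σ))
          = Real.sqrt n * (Real.sqrt kmax * Real.sqrt kmax) / (σ * σ) := by ring
        _ = Real.sqrt n * kmax / σ ^ 2 := by rw [hss]; ring
    calc 2 * Lk * |w j| * S = 2 * Lk * (|w j| * S) := by ring
      _ ≤ 2 * Lk * ((Real.sqrt kmax / σ) * (Real.sqrt n * (Real.sqrt kmax / σ))) :=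
          mul_le_mul_of_nonneg_left h4 (by linarith)
      _ = 2 * Lk * Real.sqrt n * kmax / σ ^ 2 := by rw [h5]; ring
  calc |(-(v' ⬝ᵥ w - w ⬝ᵥ (A' *ᵥ w) + w ⬝ᵥ v'))|
      ≤ |v' ⬝ᵥ w| + |w ⬝ᵥ (A' *ᵥ w)| + |w ⬝ᵥ v'| := htri
    _ ≤ 2 * (Lk * |w j|) + 2 * Lk * |w j| * S := by linarith
    _ ≤ 2 * Lk * Real.sqrt kmax / σ + 2 * Lk * Real.sqrt n * kmax / σ ^ 2 :=
        add_le_add hfin1 hfin2
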